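/- For a word x in Z_m^n chosen uniformly at random, the expected value of the sum of squares of the lengths of the maximal alternating segments of x equals n(4m^2 - 3m + 2)/m^2 + (6m-4)/m^2 - 4 - (2/(m-1))(1 - 1/m^n) + 2/m^n. -/
import Mathlib


open Finset

/-- The (0-indexed, inclusive) segment `x_i,…,x_j` is alternating, i.e. of the
form `abab…` : adjacent symbols differ and the segment has period 2. -/
def IsAltOn {m : ℕ} (x : ℕ → Fin m) (i j : ℕ) : Prop :=
  (∀ k ∈ Finset.Ico i j, x k ≠ x (k + 1)) ∧ ∀ k ∈ Finset.Ico i (j - 1), x k = x (k + 2)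

instance {m : ℕ} (x : ℕ → Fin m) (i j : ℕ) : Decidable (IsAltOn x i j) :=
  inferInstanceAs (Decidable (_ ∧ _))

/-- The set of (0-indexed, inclusive) index pairs of maximal alternating segments
of the word `x_0,…,x_{n-1}`. -/
def altSegs {m : ℕ} (n : ℕ) (x : ℕ → Fin m) : Finset (ℕ × ℕ) :=
  (Finset.range n ×ˢ Finset.range n).filter (fun p => p.1 ≤ p.2 ∧ IsAltOn x p.1 p.2 ∧
    (p.1 = 0 ∨ ¬ IsAltOn x (p.1 - 1) p.2) ∧ (p.2 = n - 1 ∨ ¬ IsAltOn x p.1 (p.2 + 1)))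

/-- `a(x)` : the number of maximal alternating segments of `x_0,…,x_{n-1}`. -/
def aCount {m : ℕ} (n : ℕ) (x : ℕ → Fin m) : ℕ := (altSegs n x).card

/-- `∑ s_i` : the sum of the lengths of the maximal alternating segments. -/
def sumLen {m : ℕ} (n : ℕ) (x : ℕ → Fin m) : ℕ := ∑ p ∈ altSegs n x, (p.2 - p.1 + 1)

/-- `∑ s_i²` : the sum of the squares of the lengths of the maximal alternating segments. -/
def sumLenSq {m : ℕ} (n : ℕ) (x : ℕ → Fin m) : ℕ := ∑ p ∈ altSegs n x, (p.2 - p.1 + 1) ^ 2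

/-- `ρ(x)` : the number of runs of the word `x_0,…,x_{n-1}`. -/
def rho {m : ℕ} (n : ℕ) (x : ℕ → Fin m) : ℕ :=
  1 + ((Finset.range (n - 1)).filter (fun i => x i ≠ x (i + 1))).card

/-- `h(x)` : the length of the first maximal alternating segment of `x_0,…,x_{n-1}`. -/
def headAlt {m : ℕ} (n : ℕ) (x : ℕ → Fin m) : ℕ :=
  ((Finset.range n).filter (fun j => IsAltOn x 0 j)).card

/-- `t(x)` : the length of the last maximal alternating segment of `x_0,…,x_{n-1}`. -/
def tailAlt {m : ℕ} (n : ℕ) (x : ℕ → Fin m) : ℕ :=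
  ((Finset.range n).filter (fun j => IsAltOn x (n - 1 - j) (n - 1))).card

/-- Extend a word of length `n` to a function `ℕ → Fin m` (junk value `0` beyond `n`). -/
def extWord {m : ℕ} (n : ℕ) (hm : 0 < m) (y : Fin n → Fin m) : ℕ → Fin m :=
  fun i => if h : i < n then y ⟨i, h⟩ else ⟨0, hm⟩

/-- The FLL ball of radius 1 around `x` : all words `y` of length `n` sharing with `x`
a common subsequence of length `n - 1` (equivalently, `d_l(x,y) ≤ 1`). -/
def L1ball {m : ℕ} (n : ℕ) (x : Fin n → Fin m) : Set (Fin n → Fin m) :=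
  {y | ∃ z : List (Fin m), z.length = n - 1 ∧ z.Sublist (List.ofFn x) ∧ z.Sublist (List.ofFn y)}

/-- `|L_1(x)|` : the size of the FLL ball of radius 1 around `x`. -/
noncomputable def L1size {m : ℕ} (n : ℕ) (x : Fin n → Fin m) : ℕ := (L1ball n x).ncard

/-- `f_n(y)` for binary words `y` of length `len` : `ρ(y)·n - (1/2)∑ s_j²`. -/
noncomputable def fB (n len : ℕ) (y : ℕ → Fin 2) : ℝ :=
  (rho len y : ℝ) * n - (sumLenSq len y : ℝ) / 2

/-- `f_{m,n}(y)` for words `y` of length `len` over `Z_m` :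
`ρ(y)(mn-n-1) - (1/2)∑ s_j² + (3/2)∑ s_j - a(y)`. -/
noncomputable def fM (m n len : ℕ) (y : ℕ → Fin m) : ℝ :=
  (rho len y : ℝ) * ((m : ℝ) * n - n - 1) - (sumLenSq len y : ℝ) / 2
    + 3 / 2 * (sumLen len y : ℝ) - (aCount len y : ℝ)

variable {m : ℕ} {x : ℕ → Fin m}

lemma altOn_mono {i j a b : ℕ} (h : IsAltOn x i j) (h1 : i ≤ a) (h2 : b ≤ j) :
    IsAltOn x a b := by
  constructor
  · intro k hk; exact h.1 k (mem_Ico.2 (by simp only [mem_Ico] at hk; omega))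
  · intro k hk; exact h.2 k (mem_Ico.2 (by simp only [mem_Ico] at hk; omega))

lemma altOn_refl (a : ℕ) : IsAltOn x a a := by
  constructor <;> intro k hk <;> simp only [mem_Ico] at hk <;> omega

lemma altOn_pair {a : ℕ} : IsAltOn x a (a + 1) ↔ x a ≠ x (a + 1) := by
  constructor
  · intro h; exact h.1 a (mem_Ico.2 (by omega))
  · intro h
    constructor
    · intro k hk; simp only [mem_Ico] at hk
      have : k = a := by omega
      subst this; exact h
    · intro k hk; simp only [mem_Ico] at hk; omega

lemma altOn_glue {i1 j1 i2 j2 : ℕ} (h1 : IsAltOn x i1 j1) (h2 : IsAltOn x i2 j2)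
    (hi : i1 ≤ i2) (hj : j1 ≤ j2) (hov : i2 < j1) : IsAltOn x i1 j2 := by
  constructor
  · intro k hk; simp only [mem_Ico] at hk
    by_cases hc : k < j1
    · exact h1.1 k (mem_Ico.2 ⟨hk.1, hc⟩)
    · exact h2.1 k (mem_Ico.2 (by omega))
  · intro k hk; simp only [mem_Ico] at hk
    by_cases hc : k < j1 - 1
    · exact h1.2 k (mem_Ico.2 ⟨hk.1, hc⟩)
    · exact h2.2 k (mem_Ico.2 (by omega))

lemma altOn_extend_right {i j : ℕ} (h : IsAltOn x i j) (hij : i ≤ j)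
    (hne : x j ≠ x (j + 1)) (hper : i = j ∨ x (j - 1) = x (j + 1)) :
    IsAltOn x i (j + 1) := by
  constructor
  · intro k hk; simp only [mem_Ico] at hk
    by_cases hc : k < j
    · exact h.1 k (mem_Ico.2 ⟨hk.1, hc⟩)
    · have : k = j := by omega
      subst this; exact hne
  · intro k hk; simp only [mem_Ico] at hk
    by_cases hc : k < j - 1
    · exact h.2 k (mem_Ico.2 ⟨hk.1, hc⟩)
    · have hkj : k = j - 1 := by omega
      rcases hper with h' | h'
      · omega
      · subst hkj
        have : j - 1 + 2 = j + 1 := by omega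
        rw [this]; exact h'

lemma altOn_extend_left {i j : ℕ} (h : IsAltOn x i j) (hij : i ≤ j) (h0 : 0 < i)
    (hne : x (i - 1) ≠ x i) (hper : i = j ∨ x (i - 1) = x (i + 1)) :
    IsAltOn x (i - 1) j := by
  constructor
  · intro k hk; simp only [mem_Ico] at hk
    by_cases hc : i ≤ k
    · exact h.1 k (mem_Ico.2 ⟨hc, hk.2⟩)
    · have : k = i - 1 := by omega
      subst this
      have : i - 1 + 1 = i := by omega
      rw [this]; exact hne
  · intro k hk; simp only [mem_Ico] at hk
    by_cases hc : i ≤ k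
    · exact h.2 k (mem_Ico.2 ⟨hc, hk.2⟩)
    · have hki : k = i - 1 := by omega
      rcases hper with h' | h'
      · omega
      · subst hki
        have : i - 1 + 2 = i + 1 := by omega
        rw [this]; exact h'

lemma mem_altSegs {n : ℕ} {p : ℕ × ℕ} :
    p ∈ altSegs n x ↔ p.1 < n ∧ p.2 < n ∧ p.1 ≤ p.2 ∧ IsAltOn x p.1 p.2 ∧
      (p.1 = 0 ∨ ¬ IsAltOn x (p.1 - 1) p.2) ∧ (p.2 = n - 1 ∨ ¬ IsAltOn x p.1 (p.2 + 1)) := by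
  simp only [altSegs, mem_filter, mem_product, mem_range]
  tauto

variable {m : ℕ} {x : ℕ → Fin m}

lemma exists_maximal {n a b : ℕ} (hab : a ≤ b) (hb : b < n) (h : IsAltOn x a b) :
    ∃ p ∈ altSegs n x, p.1 ≤ a ∧ b ≤ p.2 := by
  classical
  set L : Finset ℕ := (Finset.range (a + 1)).filter (fun i => IsAltOn x i b) with hL
  have haL : a ∈ L := by simp [hL, h]
  set i0 : ℕ := L.min' ⟨a, haL⟩ with hi0
  have hi0L : i0 ∈ L := Finset.min'_mem _ _
  have hi0a : i0 ≤ a := by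
    have := Finset.mem_filter.1 hi0L
    have := Finset.mem_range.1 this.1; omega
  have hi0alt : IsAltOn x i0 b := (Finset.mem_filter.1 hi0L).2
  set R : Finset ℕ := (Finset.range n).filter (fun j => b ≤ j ∧ IsAltOn x i0 j) with hR
  have hbR : b ∈ R := by simp [hR, hb, hi0alt]
  set j0 : ℕ := R.max' ⟨b, hbR⟩ with hj0
  have hj0R : j0 ∈ R := Finset.max'_mem _ _
  have hj0n : j0 < n := Finset.mem_range.1 (Finset.mem_filter.1 hj0R).1
  have hbj0 : b ≤ j0 := (Finset.mem_filter.1 hj0R).2.1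
  have hj0alt : IsAltOn x i0 j0 := (Finset.mem_filter.1 hj0R).2.2
  refine ⟨(i0, j0), ?_, hi0a, hbj0⟩
  rw [mem_altSegs]
  refine ⟨by omega, hj0n, by omega, hj0alt, ?_, ?_⟩
  · by_cases h0 : i0 = 0
    · exact Or.inl h0
    · refine Or.inr fun hc => ?_
      have hmem : i0 - 1 ∈ L := by
        simp only [hL, Finset.mem_filter, Finset.mem_range]
        exact ⟨by omega, altOn_mono hc (le_refl _) hbj0⟩
      have := Finset.min'_le _ _ hmem
      omega
  · by_cases hend : j0 = n - 1
    · exact Or.inl hend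
    · refine Or.inr fun hc => ?_
      have hmem : j0 + 1 ∈ R := by
        simp only [hR, Finset.mem_filter, Finset.mem_range]
        exact ⟨by omega, by omega, hc⟩
      have := Finset.le_max' _ _ hmem
      omega

lemma contain_left_le {n a b : ℕ} {p q : ℕ × ℕ} (hab : a < b)
    (hp : p ∈ altSegs n x) (hq : q ∈ altSegs n x)
    (hpa : p.1 ≤ a) (hpb : b ≤ p.2) (hqa : q.1 ≤ a) (hqb : b ≤ q.2) : q.1 ≤ p.1 := by
  rw [mem_altSegs] at hp hq
  by_contra hc
  push_neg at hc
  have h0 : 0 < q.1 := by omega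
  have halt : IsAltOn x (q.1 - 1) q.2 := by
    by_cases hc2 : q.2 ≤ p.2
    · exact altOn_mono hp.2.2.2.1 (by omega) hc2
    · exact altOn_mono (altOn_glue hp.2.2.2.1 hq.2.2.2.1 (by omega) (by omega) (by omega))
        (by omega) (le_refl _)
  rcases hq.2.2.2.2.1 with h' | h'
  · omega
  · exact h' halt

lemma contain_right_le {n a b : ℕ} {p q : ℕ × ℕ} (hab : a < b)
    (hp : p ∈ altSegs n x) (hq : q ∈ altSegs n x)
    (hpa : p.1 ≤ a) (hpb : b ≤ p.2) (hqa : q.1 ≤ a) (hqb : b ≤ q.2) : p.2 ≤ q.2 := by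
  rw [mem_altSegs] at hp hq
  by_contra hc
  push_neg at hc
  have halt : IsAltOn x q.1 (q.2 + 1) := by
    by_cases hc2 : p.1 ≤ q.1
    · exact altOn_mono hp.2.2.2.1 hc2 (by omega)
    · exact altOn_mono (altOn_glue hq.2.2.2.1 hp.2.2.2.1 (by omega) (by omega) (by omega))
        (le_refl _) (by omega)
  rcases hq.2.2.2.2.2 with h' | h'
  · omega
  · exact h' halt

lemma contain_unique {n a b : ℕ} {p q : ℕ × ℕ} (hab : a < b)
    (hp : p ∈ altSegs n x) (hq : q ∈ altSegs n x)
    (hpa : p.1 ≤ a) (hpb : b ≤ p.2) (hqa : q.1 ≤ a) (hqb : b ≤ q.2) : p = q := by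
  have h1 := contain_left_le hab hp hq hpa hpb hqa hqb
  have h2 := contain_left_le hab hq hp hqa hqb hpa hpb
  have h3 := contain_right_le hab hp hq hpa hpb hqa hqb
  have h4 := contain_right_le hab hq hp hqa hqb hpa hpb
  exact Prod.ext (by omega) (by omega)

lemma K1 {n a b : ℕ} (hab : a < b) (hb : b < n) :
    ((altSegs n x).filter fun p => p.1 ≤ a ∧ b ≤ p.2).card
      = if IsAltOn x a b then 1 else 0 := by
  split_ifs with h
  · obtain ⟨p, hp, hpa, hpb⟩ := exists_maximal (le_of_lt hab) hb h
    rw [Finset.card_eq_one]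
    refine ⟨p, ?_⟩
    ext q
    simp only [Finset.mem_filter, Finset.mem_singleton]
    constructor
    · rintro ⟨hq, hqa, hqb⟩
      exact contain_unique hab hq hp hqa hqb hpa hpb
    · rintro rfl
      exact ⟨hp, hpa, hpb⟩
  · rw [Finset.card_eq_zero]
    rw [Finset.eq_empty_iff_forall_notMem]
    rintro q hq
    rw [Finset.mem_filter] at hq
    have := (mem_altSegs.1 hq.1).2.2.2.1
    exact h (altOn_mono this hq.2.1 hq.2.2)

variable {m : ℕ} {x : ℕ → Fin m}

lemma altOn_pred_iff {u : ℕ} (hu : 0 < u) : IsAltOn x (u - 1) u ↔ x (u - 1) ≠ x u := by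
  obtain ⟨v, rfl⟩ : ∃ v, u = v + 1 := ⟨u - 1, by omega⟩
  simpa using altOn_pair (x := x) (a := v)

lemma diag_mem_altSegs {n u : ℕ} (hu : u < n) :
    (u, u) ∈ altSegs n x ↔ (u = 0 ∨ x (u - 1) = x u) ∧ (u = n - 1 ∨ x u = x (u + 1)) := by
  rw [mem_altSegs]
  constructor
  · rintro ⟨-, -, -, -, h5, h6⟩
    constructor
    · rcases h5 with h | h
      · exact Or.inl h
      · rcases Nat.eq_zero_or_pos u with h0 | h0
        · exact Or.inl h0
        · right; by_contra hne; exact h ((altOn_pred_iff h0).2 hne)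
    · rcases h6 with h | h
      · exact Or.inl h
      · right; by_contra hne; exact h (altOn_pair.2 hne)
  · rintro ⟨h1, h2⟩
    refine ⟨hu, hu, le_refl _, altOn_refl _, ?_, ?_⟩
    · rcases h1 with h | h
      · exact Or.inl h
      · rcases Nat.eq_zero_or_pos u with h0 | h0
        · exact Or.inl h0
        · right; intro hc; exact (altOn_pred_iff h0).1 hc h
    · rcases h2 with h | h
      · exact Or.inl h
      · right; intro hc; exact altOn_pair.1 hc h

variable {m : ℕ} {x : ℕ → Fin m}

lemma altOn_around_iff {u : ℕ} (hu : 0 < u) :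
    IsAltOn x (u - 1) (u + 1) ↔
      x (u - 1) ≠ x u ∧ x u ≠ x (u + 1) ∧ x (u - 1) = x (u + 1) := by
  obtain ⟨v, rfl⟩ : ∃ v, u = v + 1 := ⟨u - 1, by omega⟩
  simp only [Nat.add_sub_cancel]
  constructor
  · intro h
    refine ⟨h.1 v (mem_Ico.2 (by omega)), h.1 (v + 1) (mem_Ico.2 (by omega)),
      h.2 v (mem_Ico.2 (by omega))⟩
  · rintro ⟨h1, h2, h3⟩
    constructor
    · intro k hk
      simp only [mem_Ico] at hk
      have : k = v ∨ k = v + 1 := by omega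
      rcases this with rfl | rfl
      · exact h1
      · exact h2
    · intro k hk
      simp only [mem_Ico] at hk
      have : k = v := by omega
      subst this; exact h3

lemma K2 {n u : ℕ} (hn : 2 ≤ n) (hu : u < n) :
    ((altSegs n x).filter fun p => p.1 ≤ u ∧ u ≤ p.2).card
      + (if 0 < u ∧ u + 1 < n ∧ IsAltOn x (u - 1) (u + 1) then 1 else 0)
      = (if (u, u) ∈ altSegs n x then 1 else 0)
      + (if 0 < u ∧ x (u - 1) ≠ x u then 1 else 0)
      + (if u + 1 < n ∧ x u ≠ x (u + 1) then 1 else 0) := by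
  classical
  have habove : ∀ q ∈ altSegs n x, q.1 ≤ u → u < q.2 → u + 1 < n ∧ x u ≠ x (u + 1) := by
    intro q hq h1 h2
    rw [mem_altSegs] at hq
    have halt : IsAltOn x u (u + 1) := altOn_mono hq.2.2.2.1 h1 (by omega)
    exact ⟨by omega, altOn_pair.1 halt⟩
  have hbelow : ∀ q ∈ altSegs n x, q.1 < u → u ≤ q.2 → 0 < u ∧ x (u - 1) ≠ x u := by
    intro q hq h1 h2
    rw [mem_altSegs] at hq
    have halt : IsAltOn x (u - 1) u := altOn_mono hq.2.2.2.1 (by omega) h2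
    exact ⟨by omega, (altOn_pred_iff (by omega)).1 halt⟩
  by_cases hL : 0 < u ∧ x (u - 1) ≠ x u
  · have hA0 : (u, u) ∉ altSegs n x := by
      intro h
      rcases ((diag_mem_altSegs hu).1 h).1 with h' | h' <;> [omega; exact hL.2 h']
    by_cases hR : u + 1 < n ∧ x u ≠ x (u + 1)
    · -- L and R
      by_cases hM : x (u - 1) = x (u + 1)
      · have hMalt : IsAltOn x (u - 1) (u + 1) :=
          (altOn_around_iff hL.1).2 ⟨hL.2, hR.2, hM⟩
        have hS : (altSegs n x).filter (fun p => p.1 ≤ u ∧ u ≤ p.2)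
            = (altSegs n x).filter (fun p => p.1 ≤ u - 1 ∧ u + 1 ≤ p.2) := by
          ext q
          simp only [mem_filter, and_congr_right_iff]
          intro hq
          constructor
          · rintro ⟨h1, h2⟩
            have hq' := mem_altSegs.1 hq
            have hq2 : u + 1 ≤ q.2 := by
              by_contra hc
              have hq2u : q.2 = u := by omega
              rcases hq'.2.2.2.2.2 with h' | h'
              · omega
              · exact h' (by
                  rw [hq2u]
                  exact altOn_extend_right (by rw [← hq2u]; exact hq'.2.2.2.1)
                    (by omega) hR.2 (Or.inr hM))
            have hq1 : q.1 ≤ u - 1 := by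
              by_contra hc
              have hq1u : q.1 = u := by omega
              rcases hq'.2.2.2.2.1 with h' | h'
              · omega
              · exact h' (by
                  rw [hq1u]
                  exact altOn_extend_left (by rw [← hq1u]; exact hq'.2.2.2.1)
                    (by omega) hL.1 hL.2 (Or.inr hM))
            exact ⟨hq1, hq2⟩
          · rintro ⟨h1, h2⟩
            exact ⟨by omega, by omega⟩
        rw [hS, K1 (by omega) (by omega), if_pos hMalt,
          if_pos (show 0 < u ∧ u + 1 < n ∧ IsAltOn x (u - 1) (u + 1) from ⟨hL.1, hR.1, hMalt⟩),
          if_neg hA0, if_pos hL, if_pos hR]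
      · -- L and R, no merge : two segments
        have hM0 : ¬ IsAltOn x (u - 1) (u + 1) := fun h =>
          hM ((altOn_around_iff hL.1).1 h).2.2
        obtain ⟨p, hp, hp1, hp2⟩ :=
          exists_maximal (x := x) (show u - 1 ≤ u by omega) hu
            ((altOn_pred_iff hL.1).2 hL.2)
        obtain ⟨q, hq, hq1, hq2⟩ :=
          exists_maximal (x := x) (show u ≤ u + 1 by omega) hR.1 (altOn_pair.2 hR.2)
        have hp2u : p.2 = u := by
          by_contra hc
          have : u + 1 ≤ p.2 := by
            have := (mem_altSegs.1 hp).2.2.1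
            omega
          exact hM0 (altOn_mono (mem_altSegs.1 hp).2.2.2.1 hp1 this)
        have hq1u : q.1 = u := by
          by_contra hc
          have : q.1 ≤ u - 1 := by omega
          exact hM0 (altOn_mono (mem_altSegs.1 hq).2.2.2.1 this hq2)
        have hpq : p ≠ q := by
          intro h
          rw [h] at hp2u
          omega
        have hS : (altSegs n x).filter (fun p => p.1 ≤ u ∧ u ≤ p.2) = {p, q} := by
          ext r
          simp only [mem_filter, mem_insert, mem_singleton]
          constructor
          · rintro ⟨hr, h1, h2⟩
            by_cases hc : u + 1 ≤ r.2
            · have hr1 : r.1 = u := by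
                by_contra hc2
                exact hM0 (altOn_mono (mem_altSegs.1 hr).2.2.2.1 (by omega) hc)
              exact Or.inr (contain_unique (show u < u + 1 by omega) hr hq
                (by omega) hc hq1 hq2)
            · have hr2 : r.2 = u := by omega
              have hr1 : r.1 ≤ u - 1 := by
                by_contra hc2
                have : r = (u, u) := Prod.ext (by omega) (by omega)
                rw [this] at hr
                exact hA0 hr
              exact Or.inl (contain_unique (show u - 1 < u by omega) hr hp
                hr1 (by omega) hp1 hp2)
          · rintro (rfl | rfl)
            · exact ⟨hp, by omega, by omega⟩
            · exact ⟨hq, by omega, by omega⟩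
        rw [hS, Finset.card_pair hpq,
          if_neg (fun hc => hM0 hc.2.2), if_neg hA0, if_pos hL, if_pos hR]
    · -- L, not R
      have hS : (altSegs n x).filter (fun p => p.1 ≤ u ∧ u ≤ p.2)
          = (altSegs n x).filter (fun p => p.1 ≤ u - 1 ∧ u ≤ p.2) := by
        ext q
        simp only [mem_filter, and_congr_right_iff]
        intro hq
        constructor
        · rintro ⟨h1, h2⟩
          have hq2 : q.2 = u := by
            by_contra hc
            exact hR (habove q hq h1 (by omega))
          have hq1 : q.1 ≤ u - 1 := by
            by_contra hc2
            have : q = (u, u) := Prod.ext (by omega) (by omega)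
            rw [this] at hq
            exact hA0 hq
          exact ⟨hq1, h2⟩
        · rintro ⟨h1, h2⟩
          exact ⟨by omega, h2⟩
      rw [hS, K1 (show u - 1 < u by omega) hu, if_pos ((altOn_pred_iff hL.1).2 hL.2),
        if_neg (show ¬(0 < u ∧ u + 1 < n ∧ IsAltOn x (u - 1) (u + 1)) from fun hc =>
          hR ⟨hc.2.1, ((altOn_around_iff hL.1).1 hc.2.2).2.1⟩),
        if_neg hA0, if_pos hL, if_neg hR]
  · by_cases hR : u + 1 < n ∧ x u ≠ x (u + 1)
    · -- not L, R
      have hA0 : (u, u) ∉ altSegs n x := by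
        intro h
        rcases ((diag_mem_altSegs hu).1 h).2 with h' | h' <;> [omega; exact hR.2 h']
      have hS : (altSegs n x).filter (fun p => p.1 ≤ u ∧ u ≤ p.2)
          = (altSegs n x).filter (fun p => p.1 ≤ u ∧ u + 1 ≤ p.2) := by
        ext q
        simp only [mem_filter, and_congr_right_iff]
        intro hq h1
        constructor
        · intro h2
          have hq1 : q.1 = u := by
            by_contra hc
            exact hL (hbelow q hq (by omega) h2)
          by_contra hc2
          have : q = (u, u) := Prod.ext (by omega) (by omega)
          rw [this] at hq
          exact hA0 hq
        · intro h2
          omega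
      rw [hS, K1 (show u < u + 1 by omega) hR.1, if_pos (altOn_pair.2 hR.2),
        if_neg (show ¬(0 < u ∧ u + 1 < n ∧ IsAltOn x (u - 1) (u + 1)) from fun hc =>
          hL ⟨hc.1, ((altOn_around_iff hc.1).1 hc.2.2).1⟩),
        if_neg hA0, if_neg hL, if_pos hR]
    · -- not L, not R
      push_neg at hL hR
      have hA : (u, u) ∈ altSegs n x := by
        rw [diag_mem_altSegs hu]
        constructor
        · rcases Nat.eq_zero_or_pos u with h0 | h0
          · exact Or.inl h0
          · exact Or.inr (hL h0)
        · by_cases hc : u + 1 < n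
          · exact Or.inr (hR hc)
          · exact Or.inl (by omega)
      have hS : (altSegs n x).filter (fun p => p.1 ≤ u ∧ u ≤ p.2) = {(u, u)} := by
        ext q
        simp only [mem_filter, mem_singleton]
        constructor
        · rintro ⟨hq, h1, h2⟩
          have hq1 : q.1 = u := by
            by_contra hc
            have := hbelow q hq (by omega) h2
            exact this.2 (hL this.1)
          have hq2 : q.2 = u := by
            by_contra hc
            have := habove q hq h1 (by omega)
            exact this.2 (hR this.1)
          exact Prod.ext hq1 hq2
        · rintro rfl
          exact ⟨hA, le_refl _, le_refl _⟩
      rw [hS, Finset.card_singleton,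
        if_neg (show ¬(0 < u ∧ u + 1 < n ∧ IsAltOn x (u - 1) (u + 1)) from fun hc =>
          ((altOn_around_iff hc.1).1 hc.2.2).1 (hL hc.1)),
        if_pos hA,
        if_neg (show ¬(0 < u ∧ x (u - 1) ≠ x u) from fun hc => hc.2 (hL hc.1)),
        if_neg (show ¬(u + 1 < n ∧ x u ≠ x (u + 1)) from fun hc => hc.2 (hR hc.1))]

variable {n m : ℕ}

/-- counting words with fixed values on a set of coordinates -/
lemma count_fixed (s : Finset (Fin n)) (g : Fin n → Fin m) :
    (Finset.univ.filter fun y : Fin n → Fin m => ∀ k ∈ s, y k = g k).card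
      = m ^ (n - s.card) := by
  classical
  rw [← Fintype.card_subtype]
  have e : {y : Fin n → Fin m // ∀ k ∈ s, y k = g k} ≃ ({k : Fin n // k ∉ s} → Fin m) :=
    { toFun := fun y k => y.1 k.1
      invFun := fun z => ⟨fun k => if h : k ∈ s then g k else z ⟨k, h⟩,
        fun k hk => by simp [hk]⟩
      left_inv := fun y => by
        apply Subtype.ext
        funext k
        by_cases h : k ∈ s
        · simp [h, y.2 k h]
        · simp [h]
      right_inv := fun z => by
        funext k
        simp [k.2] }
  rw [Fintype.card_congr e, Fintype.card_fun, Fintype.card_fin,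
    Fintype.card_subtype_compl, Fintype.card_fin]
  congr 2
  exact Fintype.card_coe s

/-- counting words equal on a set of coordinates -/
lemma count_forall_eq (s : Finset (Fin n)) (k0 : Fin n) (hk0 : k0 ∈ s) :
    (Finset.univ.filter fun y : Fin n → Fin m => ∀ k ∈ s, y k = y k0).card
      = m * m ^ (n - s.card) := by
  classical
  rw [Finset.card_eq_sum_card_fiberwise
    (f := fun y : Fin n → Fin m => y k0) (t := Finset.univ) (fun y _ => mem_univ _)]
  have key : ∀ c : Fin m,
      ((Finset.univ.filter fun y : Fin n → Fin m => ∀ k ∈ s, y k = y k0).filter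
        fun y => y k0 = c).card = m ^ (n - s.card) := by
    intro c
    rw [Finset.filter_filter]
    rw [show (Finset.univ.filter fun y : Fin n → Fin m =>
        (∀ k ∈ s, y k = y k0) ∧ y k0 = c)
        = Finset.univ.filter fun y : Fin n → Fin m => ∀ k ∈ s, y k = (fun _ => c) k from ?_]
    · exact count_fixed s (fun _ => c)
    · ext y
      simp only [mem_filter, mem_univ, true_and]
      constructor
      · rintro ⟨h1, h2⟩ k hk
        rw [h1 k hk, h2]
      · intro h
        have hc : y k0 = c := h k0 hk0
        exact ⟨fun k hk => by rw [h k hk, hc], hc⟩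
  rw [Finset.sum_congr rfl (fun c _ => key c)]
  simp [Finset.card_univ]

lemma altOn_pattern {μ : ℕ} {x : ℕ → Fin μ} {u v : ℕ} (h : IsAltOn x u v) :
    ∀ k, u ≤ k → k ≤ v → x k = if Even (k - u) then x u else x (u + 1) := by
  intro k
  induction k using Nat.strong_induction_on with
  | _ k ih =>
    intro hk1 hk2
    rcases Nat.lt_or_ge k (u + 2) with hc | hc
    · rcases Nat.eq_or_lt_of_le hk1 with rfl | hc2
      · simp
      · have hk : k = u + 1 := by omega
        subst hk
        simp [Nat.succ_sub hk1, Nat.sub_self]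
    · have hper := h.2 (k - 2) (mem_Ico.2 ⟨by omega, by omega⟩)
      have hk2' : k - 2 + 2 = k := by omega
      rw [hk2'] at hper
      rw [← hper, ih (k - 2) (by omega) (by omega) (by omega)]
      have hpar : Even (k - u) ↔ Even (k - 2 - u) := by
        have h2 : k - u = (k - 2 - u) + 2 := by omega
        rw [h2, Nat.even_add]
        simp
      by_cases hev : Even (k - u)
      · rw [if_pos hev, if_pos (hpar.1 hev)]
      · rw [if_neg hev, if_neg (fun hc3 => hev (hpar.2 hc3))]

lemma pattern_altOn {μ : ℕ} {x : ℕ → Fin μ} {u v : ℕ} (huv : u < v)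
    (hne : x u ≠ x (u + 1))
    (h : ∀ k, u ≤ k → k ≤ v → x k = if Even (k - u) then x u else x (u + 1)) :
    IsAltOn x u v := by
  have hpar : ∀ k, u ≤ k → (Even (k + 1 - u) ↔ ¬ Even (k - u)) := by
    intro k hk
    rw [show k + 1 - u = (k - u) + 1 by omega, Nat.even_add_one]
  constructor
  · intro k hk
    simp only [mem_Ico] at hk
    rw [h k hk.1 (by omega), h (k + 1) (by omega) (by omega)]
    by_cases hev : Even (k - u)
    · rw [if_pos hev, if_neg (fun hc => ((hpar k hk.1).1 hc) hev)]
      exact hne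
    · rw [if_neg hev, if_pos ((hpar k hk.1).2 hev)]
      exact hne.symm
  · intro k hk
    simp only [mem_Ico] at hk
    rw [h k hk.1 (by omega), h (k + 2) (by omega) (by omega)]
    have : Even (k + 2 - u) ↔ Even (k - u) := by
      rw [show k + 2 - u = (k - u) + 2 by omega, Nat.even_add]
      simp
    by_cases hev : Even (k - u)
    · rw [if_pos hev, if_pos (this.2 hev)]
    · rw [if_neg hev, if_neg (fun hc => hev (this.1 hc))]

lemma extWord_lt {m : ℕ} (n : ℕ) (hm : 0 < m) (y : Fin n → Fin m) (k : ℕ) (hk : k < n) :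
    extWord n hm y k = y ⟨k, hk⟩ := by simp [extWord, hk]

lemma card_ne_diag (m : ℕ) :
    (Finset.univ.filter fun c : Fin m × Fin m => c.1 = c.2).card = m := by
  have himg : (Finset.univ.filter fun c : Fin m × Fin m => c.1 = c.2)
      = Finset.univ.image (fun a : Fin m => (a, a)) := by
    ext c
    simp only [mem_filter, mem_univ, true_and, mem_image]
    constructor
    · intro h
      exact ⟨c.1, Prod.ext rfl h⟩
    · rintro ⟨a, rfl⟩
      rfl
  rw [himg, Finset.card_image_of_injective _ (fun a b h => (Prod.ext_iff.1 h).1),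
    Finset.card_univ, Fintype.card_fin]

lemma count_alt (hm : 0 < m) {u v : ℕ} (huv : u < v) (hv : v < n) :
    (Finset.univ.filter fun y : Fin n → Fin m =>
        IsAltOn (extWord n hm y) u v).card = (m - 1) * m ^ (n - (v - u)) := by
  classical
  have hu : u < n := by omega
  have hu1 : u + 1 < n := by omega
  rw [Finset.card_eq_sum_card_fiberwise
    (f := fun y : Fin n → Fin m => (y ⟨u, hu⟩, y ⟨u + 1, hu1⟩)) (t := Finset.univ)
    (fun y _ => mem_univ _)]
  have key : ∀ c : Fin m × Fin m,
      ((Finset.univ.filter fun y : Fin n → Fin m => IsAltOn (extWord n hm y) u v).filter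
        fun y => (y ⟨u, hu⟩, y ⟨u + 1, hu1⟩) = c).card
      = if c.1 = c.2 then 0 else m ^ (n - (v - u + 1)) := by
    intro c
    split_ifs with hc
    · rw [Finset.card_eq_zero, Finset.eq_empty_iff_forall_notMem]
      intro y hy
      simp only [Finset.mem_filter, mem_univ, true_and] at hy
      obtain ⟨halt, rfl⟩ := hy
      have hne := altOn_pair.1 (altOn_mono halt (le_refl u) (show u + 1 ≤ v by omega))
      rw [extWord_lt n hm y u hu, extWord_lt n hm y (u + 1) hu1] at hne
      exact hne hc
    · have hset : ((Finset.univ.filter fun y : Fin n → Fin m =>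
          IsAltOn (extWord n hm y) u v).filter
          fun y => (y ⟨u, hu⟩, y ⟨u + 1, hu1⟩) = c)
          = Finset.univ.filter fun y : Fin n → Fin m =>
            ∀ k ∈ (Finset.Icc u v).attachFin
              (fun k hk => lt_of_le_of_lt (Finset.mem_Icc.1 hk).2 hv),
              y k = (if Even (k.1 - u) then c.1 else c.2) := by
        ext y
        simp only [Finset.mem_filter, mem_univ, true_and, Prod.mk.injEq,
          Finset.mem_attachFin, Finset.mem_Icc]
        constructor
        · rintro ⟨halt, rfl⟩ k hk
          have hpat := altOn_pattern halt k.1 hk.1 hk.2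
          rw [extWord_lt n hm y k.1 k.2, extWord_lt n hm y u hu,
            extWord_lt n hm y (u + 1) hu1] at hpat
          simp only [Fin.eta] at hpat
          simpa using hpat
        · intro h
          have h1 : y ⟨u, hu⟩ = c.1 := by
            have := h ⟨u, hu⟩ ⟨le_refl u, le_of_lt huv⟩
            simpa using this
          have h2 : y ⟨u + 1, hu1⟩ = c.2 := by
            have := h ⟨u + 1, hu1⟩ ⟨Nat.le_succ u, huv⟩
            rw [this, if_neg (by rw [show u + 1 - u = 1 by omega]; exact Nat.not_even_one)]
          refine ⟨?_, Prod.ext h1 h2⟩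
          apply pattern_altOn huv
          · rw [extWord_lt n hm y u hu, extWord_lt n hm y (u + 1) hu1, h1, h2]
            exact hc
          · intro k hk1 hk2
            have hkn : k < n := by omega
            rw [extWord_lt n hm y k hkn, extWord_lt n hm y u hu,
              extWord_lt n hm y (u + 1) hu1, h1, h2]
            exact h ⟨k, hkn⟩ ⟨hk1, hk2⟩
      rw [hset, count_fixed]
      congr 1
      rw [Finset.card_attachFin, Nat.card_Icc]
      omega
  rw [Finset.sum_congr rfl (fun c _ => key c)]
  rw [Finset.sum_ite, Finset.sum_const_zero, Finset.sum_const, zero_add, smul_eq_mul]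
  have hcard : (Finset.univ.filter fun c : Fin m × Fin m => ¬ c.1 = c.2).card
      = m * m - m := by
    have h1 := Finset.card_filter_add_card_filter_not
      (s := (Finset.univ : Finset (Fin m × Fin m))) (p := fun c => c.1 = c.2)
    rw [card_ne_diag, Finset.card_univ] at h1
    simp only [Fintype.card_prod, Fintype.card_fin] at h1
    omega
  have hpow : m * m ^ (n - (v - u + 1)) = m ^ (n - (v - u)) := by
    rw [← pow_succ']
    congr 1
    omega
  rw [hcard, show m * m - m = (m - 1) * m from by rw [Nat.sub_mul, one_mul],
    mul_assoc, hpow]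

variable {n m : ℕ}

lemma sumLenSq_expand (x : ℕ → Fin m) :
    sumLenSq n x = ∑ q ∈ Finset.range n ×ˢ Finset.range n,
      ((altSegs n x).filter fun p => p.1 ≤ q.1 ∧ q.1 ≤ p.2 ∧ p.1 ≤ q.2 ∧ q.2 ≤ p.2).card := by
  rw [sumLenSq]
  have step : ∀ p ∈ altSegs n x, (p.2 - p.1 + 1) ^ 2
      = ∑ q ∈ Finset.range n ×ˢ Finset.range n,
          if p.1 ≤ q.1 ∧ q.1 ≤ p.2 ∧ p.1 ≤ q.2 ∧ q.2 ≤ p.2 then 1 else 0 := by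
    intro p hp
    rw [mem_altSegs] at hp
    rw [← Finset.card_filter]
    have hset : ((Finset.range n ×ˢ Finset.range n).filter
        fun q => p.1 ≤ q.1 ∧ q.1 ≤ p.2 ∧ p.1 ≤ q.2 ∧ q.2 ≤ p.2)
        = Finset.Icc p.1 p.2 ×ˢ Finset.Icc p.1 p.2 := by
      ext q
      simp only [Finset.mem_filter, Finset.mem_product, Finset.mem_range, Finset.mem_Icc]
      constructor
      · rintro ⟨⟨h1, h2⟩, h3, h4, h5, h6⟩
        exact ⟨⟨h3, h4⟩, h5, h6⟩
      · rintro ⟨⟨h1, h2⟩, h3, h4⟩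
        exact ⟨⟨by omega, by omega⟩, h1, h2, h3, h4⟩
    rw [hset, Finset.card_product, Nat.card_Icc]
    have : p.2 + 1 - p.1 = p.2 - p.1 + 1 := by omega
    rw [this, pow_two]
  rw [Finset.sum_congr rfl step, Finset.sum_comm]
  exact Finset.sum_congr rfl fun q _ => (Finset.card_filter _ _).symm

lemma count_eq2 (hm0 : 0 < m) (a b : Fin n) (hab : a ≠ b) :
    (Finset.univ.filter fun y : Fin n → Fin m => y a = y b).card = m * m ^ (n - 2) := by
  have hset : (Finset.univ.filter fun y : Fin n → Fin m => y a = y b)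
      = Finset.univ.filter fun y => ∀ k ∈ ({a, b} : Finset (Fin n)), y k = y a := by
    ext y
    simp only [Finset.mem_filter, Finset.mem_univ, true_and, Finset.mem_insert,
      Finset.mem_singleton]
    constructor
    · rintro h k (rfl | rfl)
      · rfl
      · exact h.symm
    · intro h
      exact (h b (Or.inr rfl)).symm
  rw [hset, count_forall_eq _ a (Finset.mem_insert_self a _), Finset.card_pair hab]

lemma count_ne2 (hm0 : 0 < m) (a b : Fin n) (hab : a ≠ b) :
    (Finset.univ.filter fun y : Fin n → Fin m => y a ≠ y b).card
      = m ^ n - m * m ^ (n - 2) := by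
  have h1 := Finset.card_filter_add_card_filter_not
    (s := (Finset.univ : Finset (Fin n → Fin m))) (p := fun y => y a = y b)
  rw [count_eq2 hm0 a b hab, Finset.card_univ] at h1
  have h2 : Fintype.card (Fin n → Fin m) = m ^ n := by
    rw [Fintype.card_fun, Fintype.card_fin, Fintype.card_fin]
  rw [h2] at h1
  exact Nat.eq_sub_of_add_eq' h1

lemma count_eq3 (hm0 : 0 < m) (a b c : Fin n) (hab : a ≠ b) (hbc : b ≠ c) (hac : a ≠ c) :
    (Finset.univ.filter fun y : Fin n → Fin m => y a = y b ∧ y b = y c).card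
      = m * m ^ (n - 3) := by
  have hset : (Finset.univ.filter fun y : Fin n → Fin m => y a = y b ∧ y b = y c)
      = Finset.univ.filter fun y => ∀ k ∈ ({a, b, c} : Finset (Fin n)), y k = y b := by
    ext y
    simp only [Finset.mem_filter, Finset.mem_univ, true_and, Finset.mem_insert,
      Finset.mem_singleton]
    constructor
    · rintro ⟨h1, h2⟩ k (rfl | rfl | rfl)
      · exact h1
      · rfl
      · exact h2.symm
    · intro h
      exact ⟨h a (Or.inl rfl), (h c (Or.inr (Or.inr rfl))).symm⟩
  rw [hset, count_forall_eq _ b (by simp)]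
  congr 2
  rw [Finset.card_insert_of_notMem (by simp [hab, hac]), Finset.card_pair hbc]

variable {n m : ℕ}

lemma offdiag_count (hm0 : 0 < m) {a b : ℕ} (hab : a < b) (hb : b < n) :
    (∑ y : Fin n → Fin m, ((altSegs n (extWord n hm0 y)).filter
        fun p => p.1 ≤ a ∧ b ≤ p.2).card)
      = (m - 1) * m ^ (n - (b - a)) := by
  have key : ∀ y : Fin n → Fin m, ((altSegs n (extWord n hm0 y)).filter
      fun p => p.1 ≤ a ∧ b ≤ p.2).card
      = if IsAltOn (extWord n hm0 y) a b then 1 else 0 := fun y => K1 hab hb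
  rw [Finset.sum_congr rfl fun y _ => key y, ← Finset.card_filter]
  exact count_alt hm0 hab hb

lemma diag_count (hm0 : 0 < m) (hn : 2 ≤ n) {u : ℕ} (hu : u < n) :
    (∑ y : Fin n → Fin m, ((altSegs n (extWord n hm0 y)).filter
        fun p => p.1 ≤ u ∧ u ≤ p.2).card)
      + (if 0 < u ∧ u + 1 < n then (m - 1) * m ^ (n - 2) else 0)
      = (if u = 0 ∨ u = n - 1 then m * m ^ (n - 2) else m * m ^ (n - 3))
        + (if 0 < u then m ^ n - m * m ^ (n - 2) else 0)
        + (if u + 1 < n then m ^ n - m * m ^ (n - 2) else 0) := by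
  classical
  have hsum : ∀ y : Fin n → Fin m,
      ((altSegs n (extWord n hm0 y)).filter fun p => p.1 ≤ u ∧ u ≤ p.2).card
        + (if 0 < u ∧ u + 1 < n ∧ IsAltOn (extWord n hm0 y) (u - 1) (u + 1) then 1 else 0)
      = (if (u, u) ∈ altSegs n (extWord n hm0 y) then 1 else 0)
        + (if 0 < u ∧ extWord n hm0 y (u - 1) ≠ extWord n hm0 y u then 1 else 0)
        + (if u + 1 < n ∧ extWord n hm0 y u ≠ extWord n hm0 y (u + 1) then 1 else 0) :=
    fun y => K2 hn hu
  have htot := Finset.sum_congr rfl fun (y : Fin n → Fin m) (_ : y ∈ Finset.univ) => hsum y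
  rw [Finset.sum_add_distrib, Finset.sum_add_distrib, Finset.sum_add_distrib] at htot
  -- the M sum
  have hM : (∑ y : Fin n → Fin m,
      if 0 < u ∧ u + 1 < n ∧ IsAltOn (extWord n hm0 y) (u - 1) (u + 1) then 1 else 0)
      = (if 0 < u ∧ u + 1 < n then (m - 1) * m ^ (n - 2) else 0) := by
    by_cases hg : 0 < u ∧ u + 1 < n
    · rw [if_pos hg]
      have hstep : ∀ y : Fin n → Fin m,
          (if 0 < u ∧ u + 1 < n ∧ IsAltOn (extWord n hm0 y) (u - 1) (u + 1) then 1 else 0)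
          = if IsAltOn (extWord n hm0 y) (u - 1) (u + 1) then 1 else 0 := by
        intro y
        by_cases hc : IsAltOn (extWord n hm0 y) (u - 1) (u + 1)
        · rw [if_pos ⟨hg.1, hg.2, hc⟩, if_pos hc]
        · rw [if_neg (fun h => hc h.2.2), if_neg hc]
      rw [Finset.sum_congr rfl fun y _ => hstep y, ← Finset.card_filter]
      rw [count_alt hm0 (show u - 1 < u + 1 by omega) hg.2]
      congr 2
      omega
    · rw [if_neg hg]
      apply Finset.sum_eq_zero
      intro y _
      rw [if_neg (fun h => hg ⟨h.1, h.2.1⟩)]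
  -- the A sum
  have hA : (∑ y : Fin n → Fin m,
      if (u, u) ∈ altSegs n (extWord n hm0 y) then 1 else 0)
      = (if u = 0 ∨ u = n - 1 then m * m ^ (n - 2) else m * m ^ (n - 3)) := by
    rcases Nat.eq_zero_or_pos u with rfl | hu0
    · rw [if_pos (Or.inl rfl)]
      have hstep : ∀ y : Fin n → Fin m,
          (if (0, 0) ∈ altSegs n (extWord n hm0 y) then 1 else 0)
          = if y ⟨0, by omega⟩ = y ⟨1, by omega⟩ then (1 : ℕ) else 0 := by
        intro y
        have hiff : (0, 0) ∈ altSegs n (extWord n hm0 y) ↔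
            y ⟨0, by omega⟩ = y ⟨1, by omega⟩ := by
          rw [diag_mem_altSegs (by omega)]
          rw [extWord_lt n hm0 y 0 (by omega), extWord_lt n hm0 y 1 (by omega)]
          constructor
          · rintro ⟨-, h2 | h2⟩
            · omega
            · exact h2
          · intro h
            exact ⟨Or.inl rfl, Or.inr h⟩
        by_cases hc : y ⟨0, by omega⟩ = y ⟨1, by omega⟩
        · rw [if_pos (hiff.2 hc), if_pos hc]
        · rw [if_neg (fun h => hc (hiff.1 h)), if_neg hc]
      rw [Finset.sum_congr rfl fun y _ => hstep y, ← Finset.card_filter]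
      exact count_eq2 hm0 _ _ (by simp [Fin.ext_iff])
    · by_cases hun : u = n - 1
      · subst hun
        rw [if_pos (Or.inr rfl)]
        have hstep : ∀ y : Fin n → Fin m,
            (if (n - 1, n - 1) ∈ altSegs n (extWord n hm0 y) then 1 else 0)
            = if y ⟨n - 2, by omega⟩ = y ⟨n - 1, by omega⟩ then (1 : ℕ) else 0 := by
          intro y
          have hiff : (n - 1, n - 1) ∈ altSegs n (extWord n hm0 y) ↔
              y ⟨n - 2, by omega⟩ = y ⟨n - 1, by omega⟩ := by
            rw [diag_mem_altSegs (by omega)]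
            rw [show n - 1 - 1 = n - 2 by omega]
            rw [extWord_lt n hm0 y (n - 2) (by omega), extWord_lt n hm0 y (n - 1) (by omega)]
            constructor
            · rintro ⟨h2 | h2, -⟩
              · omega
              · exact h2
            · intro h
              exact ⟨Or.inr h, Or.inl rfl⟩
          by_cases hc : y ⟨n - 2, by omega⟩ = y ⟨n - 1, by omega⟩
          · rw [if_pos (hiff.2 hc), if_pos hc]
          · rw [if_neg (fun h => hc (hiff.1 h)), if_neg hc]
        rw [Finset.sum_congr rfl fun y _ => hstep y, ← Finset.card_filter]
        exact count_eq2 hm0 _ _ (by simp only [ne_eq, Fin.mk.injEq]; omega)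
      · rw [if_neg (by omega)]
        have hu1 : u - 1 < n := by omega
        have hu2 : u + 1 < n := by omega
        have hstep : ∀ y : Fin n → Fin m,
            (if (u, u) ∈ altSegs n (extWord n hm0 y) then 1 else 0)
            = if y ⟨u - 1, hu1⟩ = y ⟨u, hu⟩ ∧ y ⟨u, hu⟩ = y ⟨u + 1, hu2⟩
              then (1 : ℕ) else 0 := by
          intro y
          have hiff : (u, u) ∈ altSegs n (extWord n hm0 y) ↔
              y ⟨u - 1, hu1⟩ = y ⟨u, hu⟩ ∧ y ⟨u, hu⟩ = y ⟨u + 1, hu2⟩ := by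
            rw [diag_mem_altSegs hu]
            rw [extWord_lt n hm0 y (u - 1) hu1, extWord_lt n hm0 y u hu,
              extWord_lt n hm0 y (u + 1) hu2]
            constructor
            · rintro ⟨h1 | h1, h2 | h2⟩
              · omega
              · omega
              · omega
              · exact ⟨h1, h2⟩
            · rintro ⟨h1, h2⟩
              exact ⟨Or.inr h1, Or.inr h2⟩
          by_cases hc : y ⟨u - 1, hu1⟩ = y ⟨u, hu⟩ ∧ y ⟨u, hu⟩ = y ⟨u + 1, hu2⟩
          · rw [if_pos (hiff.2 hc), if_pos hc]
          · rw [if_neg (fun h => hc (hiff.1 h)), if_neg hc]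
        rw [Finset.sum_congr rfl fun y _ => hstep y, ← Finset.card_filter]
        exact count_eq3 hm0 _ _ _ (by simp only [ne_eq, Fin.mk.injEq]; omega) (by simp only [ne_eq, Fin.mk.injEq]; omega)
          (by simp only [ne_eq, Fin.mk.injEq]; omega)
  -- the B sum
  have hB : (∑ y : Fin n → Fin m,
      if 0 < u ∧ extWord n hm0 y (u - 1) ≠ extWord n hm0 y u then 1 else 0)
      = (if 0 < u then m ^ n - m * m ^ (n - 2) else 0) := by
    by_cases hg : 0 < u
    · rw [if_pos hg]
      have hu1 : u - 1 < n := by omega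
      have hstep : ∀ y : Fin n → Fin m,
          (if 0 < u ∧ extWord n hm0 y (u - 1) ≠ extWord n hm0 y u then 1 else 0)
          = if y ⟨u - 1, hu1⟩ ≠ y ⟨u, hu⟩ then (1 : ℕ) else 0 := by
        intro y
        rw [extWord_lt n hm0 y (u - 1) hu1, extWord_lt n hm0 y u hu]
        by_cases hc : y ⟨u - 1, hu1⟩ ≠ y ⟨u, hu⟩
        · rw [if_pos ⟨hg, hc⟩, if_pos hc]
        · rw [if_neg (fun h => hc h.2), if_neg hc]
      rw [Finset.sum_congr rfl fun y _ => hstep y, ← Finset.card_filter]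
      exact count_ne2 hm0 _ _ (by simp only [ne_eq, Fin.mk.injEq]; omega)
    · rw [if_neg hg]
      apply Finset.sum_eq_zero
      intro y _
      rw [if_neg (fun h => hg h.1)]
  -- the C sum
  have hC : (∑ y : Fin n → Fin m,
      if u + 1 < n ∧ extWord n hm0 y u ≠ extWord n hm0 y (u + 1) then 1 else 0)
      = (if u + 1 < n then m ^ n - m * m ^ (n - 2) else 0) := by
    by_cases hg : u + 1 < n
    · rw [if_pos hg]
      have hstep : ∀ y : Fin n → Fin m,
          (if u + 1 < n ∧ extWord n hm0 y u ≠ extWord n hm0 y (u + 1) then 1 else 0)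
          = if y ⟨u, hu⟩ ≠ y ⟨u + 1, hg⟩ then (1 : ℕ) else 0 := by
        intro y
        rw [extWord_lt n hm0 y u hu, extWord_lt n hm0 y (u + 1) hg]
        by_cases hc : y ⟨u, hu⟩ ≠ y ⟨u + 1, hg⟩
        · rw [if_pos ⟨hg, hc⟩, if_pos hc]
        · rw [if_neg (fun h => hc h.2), if_neg hc]
      rw [Finset.sum_congr rfl fun y _ => hstep y, ← Finset.card_filter]
      exact count_ne2 hm0 _ _ (by simp [Fin.ext_iff])
    · rw [if_neg hg]
      apply Finset.sum_eq_zero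
      intro y _
      rw [if_neg (fun h => hg h.1)]
  rw [hM, hA, hB, hC] at htot
  exact htot

variable {n m : ℕ}

lemma step_offdiag (hm0 : 0 < m) {a b : ℕ} (hab : a < b) (hb : b < n) :
    (∑ y : Fin n → Fin m, ((altSegs n (extWord n hm0 y)).filter
        fun p => p.1 ≤ a ∧ a ≤ p.2 ∧ p.1 ≤ b ∧ b ≤ p.2).card)
      = (m - 1) * m ^ (n - (b - a)) := by
  have hcongr : ∀ y : Fin n → Fin m, ((altSegs n (extWord n hm0 y)).filter
      fun p => p.1 ≤ a ∧ a ≤ p.2 ∧ p.1 ≤ b ∧ b ≤ p.2)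
      = ((altSegs n (extWord n hm0 y)).filter fun p => p.1 ≤ a ∧ b ≤ p.2) := by
    intro y
    apply Finset.filter_congr
    intro p _
    constructor
    · rintro ⟨h1, h2, h3, h4⟩
      exact ⟨h1, h4⟩
    · rintro ⟨h1, h4⟩
      exact ⟨h1, by omega, by omega, h4⟩
  rw [Finset.sum_congr rfl fun y _ => by rw [hcongr y]]
  exact offdiag_count hm0 hab hb

lemma step_offdiag' (hm0 : 0 < m) {a b : ℕ} (hab : b < a) (ha : a < n) :
    (∑ y : Fin n → Fin m, ((altSegs n (extWord n hm0 y)).filter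
        fun p => p.1 ≤ a ∧ a ≤ p.2 ∧ p.1 ≤ b ∧ b ≤ p.2).card)
      = (m - 1) * m ^ (n - (a - b)) := by
  have hcongr : ∀ y : Fin n → Fin m, ((altSegs n (extWord n hm0 y)).filter
      fun p => p.1 ≤ a ∧ a ≤ p.2 ∧ p.1 ≤ b ∧ b ≤ p.2)
      = ((altSegs n (extWord n hm0 y)).filter
        fun p => p.1 ≤ b ∧ b ≤ p.2 ∧ p.1 ≤ a ∧ a ≤ p.2) := by
    intro y
    apply Finset.filter_congr
    intro p _
    constructor
    · rintro ⟨h1, h2, h3, h4⟩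
      exact ⟨h3, h4, h1, h2⟩
    · rintro ⟨h1, h2, h3, h4⟩
      exact ⟨h3, h4, h1, h2⟩
  rw [Finset.sum_congr rfl fun y _ => by rw [hcongr y]]
  exact step_offdiag hm0 hab ha

lemma step_diag (hm0 : 0 < m) (hn : 2 ≤ n) {u : ℕ} (hu : u < n) :
    (∑ y : Fin n → Fin m, ((altSegs n (extWord n hm0 y)).filter
        fun p => p.1 ≤ u ∧ u ≤ p.2 ∧ p.1 ≤ u ∧ u ≤ p.2).card)
      + (if 0 < u ∧ u + 1 < n then (m - 1) * m ^ (n - 2) else 0)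
      = (if u = 0 ∨ u = n - 1 then m * m ^ (n - 2) else m * m ^ (n - 3))
        + (if 0 < u then m ^ n - m * m ^ (n - 2) else 0)
        + (if u + 1 < n then m ^ n - m * m ^ (n - 2) else 0) := by
  have hcongr : ∀ y : Fin n → Fin m, ((altSegs n (extWord n hm0 y)).filter
      fun p => p.1 ≤ u ∧ u ≤ p.2 ∧ p.1 ≤ u ∧ u ≤ p.2)
      = ((altSegs n (extWord n hm0 y)).filter fun p => p.1 ≤ u ∧ u ≤ p.2) := by
    intro y
    apply Finset.filter_congr
    intro p _
    exact ⟨fun ⟨h1, h2, _, _⟩ => ⟨h1, h2⟩, fun ⟨h1, h2⟩ => ⟨h1, h2, h1, h2⟩⟩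
  rw [Finset.sum_congr rfl fun y _ => by rw [hcongr y]]
  exact diag_count hm0 hn hu

/-- For a uniformly random `x ∈ Z_m^n`, the expected value of the sum of the squares of
the lengths of the maximal alternating segments equals
`n(4m²-3m+2)/m² + (6m-4)/m² - 4 - (2/(m-1))(1 - 1/mⁿ) + 2/mⁿ`. -/
theorem stmt6 (n m : ℕ) (hn : 2 ≤ n) (hm : 2 ≤ m) :
    (∑ y : Fin n → Fin m, (sumLenSq n (extWord n (by omega) y) : ℝ)) / (m : ℝ) ^ n
      = (n : ℝ) * (4 * (m : ℝ) ^ 2 - 3 * m + 2) / (m : ℝ) ^ 2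
          + (6 * (m : ℝ) - 4) / (m : ℝ) ^ 2 - 4
          - 2 / ((m : ℝ) - 1) * (1 - 1 / (m : ℝ) ^ n) + 2 / (m : ℝ) ^ n := by
  have hm0 : 0 < m := by omega
  obtain ⟨n', rfl⟩ : ∃ n', n = n' + 2 := ⟨n - 2, by omega⟩
  have hX2 : (2 : ℝ) ≤ (m : ℝ) := by exact_mod_cast hm
  have hXne : (m : ℝ) ≠ 0 := by linarith
  have hX1ne : (m : ℝ) - 1 ≠ 0 := by linarith
  have hrne : (m : ℝ)⁻¹ ≠ 1 := by
    have hinv : (m : ℝ)⁻¹ * (m : ℝ) = 1 := inv_mul_cancel₀ hXne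
    intro h
    rw [h, one_mul] at hinv
    linarith
  have hPne : (m : ℝ) ^ (n' + 2) ≠ 0 := pow_ne_zero _ hXne
  have hmle : m * m ^ n' ≤ m ^ (n' + 2) := by
    calc m * m ^ n' = m ^ (n' + 1) := (pow_succ' m n').symm
    _ ≤ m ^ (n' + 2) := Nat.pow_le_pow_right (by omega) (by omega)
  have hm1 : (1 : ℕ) ≤ m := by omega
  -- ℕ-level swap
  have hswapN : (∑ y : Fin (n' + 2) → Fin m, sumLenSq (n' + 2) (extWord (n' + 2) hm0 y))
      = ∑ a ∈ range (n' + 2), ∑ b ∈ range (n' + 2),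
          ∑ y : Fin (n' + 2) → Fin m, ((altSegs (n' + 2) (extWord (n' + 2) hm0 y)).filter
            fun p => p.1 ≤ a ∧ a ≤ p.2 ∧ p.1 ≤ b ∧ b ≤ p.2).card := by
    rw [Finset.sum_congr rfl fun y _ => sumLenSq_expand _, Finset.sum_comm,
      Finset.sum_product]
  -- real-level pointwise values
  have hdiag_cast : ∀ u, u < n' + 2 →
      (∑ y : Fin (n' + 2) → Fin m, (((altSegs (n' + 2) (extWord (n' + 2) hm0 y)).filter
        fun p => p.1 ≤ u ∧ u ≤ p.2 ∧ p.1 ≤ u ∧ u ≤ p.2).card : ℝ))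
      = (if u = 0 ∨ u = n' + 1 then (m : ℝ) * (m : ℝ) ^ n' else (m : ℝ) * (m : ℝ) ^ (n' - 1))
        + (if 0 < u then (m : ℝ) ^ (n' + 2) - (m : ℝ) * (m : ℝ) ^ n' else 0)
        + (if u + 1 < n' + 2 then (m : ℝ) ^ (n' + 2) - (m : ℝ) * (m : ℝ) ^ n' else 0)
        - (if 0 < u ∧ u + 1 < n' + 2 then ((m : ℝ) - 1) * (m : ℝ) ^ n' else 0) := by
    intro u hu
    have h := step_diag hm0 (by omega) (show u < n' + 2 from hu)
    have e1 : n' + 2 - 1 = n' + 1 := rfl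
    have e2 : n' + 2 - 2 = n' := rfl
    have e3 : n' + 2 - 3 = n' - 1 := rfl
    rw [e1, e2, e3] at h
    have hcast := congrArg (fun t : ℕ => (t : ℝ)) h
    push_cast [apply_ite (fun t : ℕ => (t : ℝ)), Nat.cast_sub hmle, Nat.cast_sub hm1]
      at hcast
    linarith [hcast]
  have hlow : ∀ a ∈ range (n' + 2), ∀ b ∈ range a,
      (∑ y : Fin (n' + 2) → Fin m, (((altSegs (n' + 2) (extWord (n' + 2) hm0 y)).filter
        fun p => p.1 ≤ a ∧ a ≤ p.2 ∧ p.1 ≤ b ∧ b ≤ p.2).card : ℝ))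
      = ((m : ℝ) - 1) * (m : ℝ) ^ (n' + 2 - (a - b)) := by
    intro a ha b hb
    rw [← Nat.cast_sum, step_offdiag' hm0 (mem_range.1 hb) (mem_range.1 ha)]
    push_cast [Nat.cast_sub hm1]
    ring
  have hupp : ∀ b ∈ range (n' + 2), ∀ a ∈ range b,
      (∑ y : Fin (n' + 2) → Fin m, (((altSegs (n' + 2) (extWord (n' + 2) hm0 y)).filter
        fun p => p.1 ≤ a ∧ a ≤ p.2 ∧ p.1 ≤ b ∧ b ≤ p.2).card : ℝ))
      = ((m : ℝ) - 1) * (m : ℝ) ^ (n' + 2 - (b - a)) := by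
    intro b hb a ha
    rw [← Nat.cast_sum, step_offdiag hm0 (mem_range.1 ha) (mem_range.1 hb)]
    push_cast [Nat.cast_sub hm1]
    ring
  -- the triangle sum closed form
  have hTinner : ∀ v ∈ range (n' + 2),
      (∑ u ∈ range v, ((m : ℝ) - 1) * (m : ℝ) ^ (n' + 2 - (v - u)))
      = ((m : ℝ) - 1) * (m : ℝ) ^ (n' + 1) * (((m : ℝ)⁻¹ ^ v - 1) / ((m : ℝ)⁻¹ - 1)) := by
    intro v hv
    rw [mem_range] at hv
    have h1 : ∀ u ∈ range v, ((m : ℝ) - 1) * (m : ℝ) ^ (n' + 2 - (v - u))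
        = (fun j => ((m : ℝ) - 1) * (m : ℝ) ^ (n' + 2 - (j + 1))) (v - 1 - u) := by
      intro u hu
      rw [mem_range] at hu
      simp only []
      congr 2
      omega
    rw [Finset.sum_congr rfl h1,
      Finset.sum_range_reflect (fun j => ((m : ℝ) - 1) * (m : ℝ) ^ (n' + 2 - (j + 1))) v]
    have h2 : ∀ j ∈ range v, ((m : ℝ) - 1) * (m : ℝ) ^ (n' + 2 - (j + 1))
        = ((m : ℝ) - 1) * (m : ℝ) ^ (n' + 1) * (m : ℝ)⁻¹ ^ j := by
      intro j hj
      rw [mem_range] at hj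
      have hXj : (m : ℝ) ^ (n' + 2 - (j + 1)) * (m : ℝ) ^ j = (m : ℝ) ^ (n' + 1) := by
        rw [← pow_add]
        congr 1
        omega
      have hpj : (m : ℝ) ^ j ≠ 0 := pow_ne_zero _ hXne
      have : (m : ℝ) ^ (n' + 2 - (j + 1)) = (m : ℝ) ^ (n' + 1) * (m : ℝ)⁻¹ ^ j := by
        rw [inv_pow, ← div_eq_mul_inv, eq_div_iff hpj]
        exact hXj
      rw [this]
      ring
    rw [Finset.sum_congr rfl h2, ← Finset.mul_sum, geom_sum_eq hrne v]
  have hT : (∑ v ∈ range (n' + 2), ∑ u ∈ range v,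
        ((m : ℝ) - 1) * (m : ℝ) ^ (n' + 2 - (v - u)))
      = ((m : ℝ) - 1) * (m : ℝ) ^ (n' + 1)
        * ((((m : ℝ)⁻¹ ^ (n' + 2) - 1) / ((m : ℝ)⁻¹ - 1) - (n' + 2)) / ((m : ℝ)⁻¹ - 1)) := by
    rw [Finset.sum_congr rfl hTinner, ← Finset.mul_sum]
    congr 1
    rw [← Finset.sum_div]
    congr 1
    rw [Finset.sum_sub_distrib, geom_sum_eq hrne, Finset.sum_const, card_range,
      nsmul_eq_mul]
    push_cast
    ring
  -- sums of the diagonal pieces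
  have hAsum : (∑ u ∈ range (n' + 2),
      (if u = 0 ∨ u = n' + 1 then (m : ℝ) * (m : ℝ) ^ n' else (m : ℝ) * (m : ℝ) ^ (n' - 1)))
      = 2 * ((m : ℝ) * (m : ℝ) ^ n') + (n' : ℝ) * ((m : ℝ) * (m : ℝ) ^ (n' - 1)) := by
    rw [Finset.sum_range_succ, Finset.sum_range_succ']
    rw [if_pos (Or.inr rfl), if_pos (Or.inl rfl)]
    have hmid : ∀ i ∈ range n',
        (if i + 1 = 0 ∨ i + 1 = n' + 1 then (m : ℝ) * (m : ℝ) ^ n' else (m : ℝ) * (m : ℝ) ^ (n' - 1))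
        = (m : ℝ) * (m : ℝ) ^ (n' - 1) := by
      intro i hi
      rw [mem_range] at hi
      rw [if_neg (by omega)]
    rw [Finset.sum_congr rfl hmid, Finset.sum_const, card_range, nsmul_eq_mul]
    ring
  have hBsum : (∑ u ∈ range (n' + 2), (if 0 < u then ((m : ℝ) ^ (n' + 2) - (m : ℝ) * (m : ℝ) ^ n') else 0))
      = ((n' : ℝ) + 1) * ((m : ℝ) ^ (n' + 2) - (m : ℝ) * (m : ℝ) ^ n') := by
    rw [Finset.sum_range_succ', if_neg (by omega)]
    have hmid : ∀ i ∈ range (n' + 1), (if 0 < i + 1 then ((m : ℝ) ^ (n' + 2) - (m : ℝ) * (m : ℝ) ^ n') else 0) = ((m : ℝ) ^ (n' + 2) - (m : ℝ) * (m : ℝ) ^ n') := by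
      intro i _
      rw [if_pos (by omega)]
    rw [Finset.sum_congr rfl hmid, Finset.sum_const, card_range, nsmul_eq_mul]
    push_cast
    ring
  have hCsum : (∑ u ∈ range (n' + 2), (if u + 1 < n' + 2 then ((m : ℝ) ^ (n' + 2) - (m : ℝ) * (m : ℝ) ^ n') else 0))
      = ((n' : ℝ) + 1) * ((m : ℝ) ^ (n' + 2) - (m : ℝ) * (m : ℝ) ^ n') := by
    rw [Finset.sum_range_succ, if_neg (by omega)]
    have hmid : ∀ u ∈ range (n' + 1), (if u + 1 < n' + 2 then ((m : ℝ) ^ (n' + 2) - (m : ℝ) * (m : ℝ) ^ n') else 0) = ((m : ℝ) ^ (n' + 2) - (m : ℝ) * (m : ℝ) ^ n') := by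
      intro u hu
      rw [mem_range] at hu
      rw [if_pos (by omega)]
    rw [Finset.sum_congr rfl hmid, Finset.sum_const, card_range, nsmul_eq_mul]
    push_cast
    ring
  have hMsum : (∑ u ∈ range (n' + 2),
      (if 0 < u ∧ u + 1 < n' + 2 then ((m : ℝ) - 1) * (m : ℝ) ^ n' else 0))
      = (n' : ℝ) * (((m : ℝ) - 1) * (m : ℝ) ^ n') := by
    rw [Finset.sum_range_succ, if_neg (by omega), Finset.sum_range_succ', if_neg (by omega)]
    have hmid : ∀ i ∈ range n',
        (if 0 < i + 1 ∧ i + 1 + 1 < n' + 2 then ((m : ℝ) - 1) * (m : ℝ) ^ n' else 0)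
        = ((m : ℝ) - 1) * (m : ℝ) ^ n' := by
      intro i hi
      rw [mem_range] at hi
      rw [if_pos ⟨by omega, by omega⟩]
    rw [Finset.sum_congr rfl hmid, Finset.sum_const, card_range, nsmul_eq_mul]
    ring
  have hn'cast : (n' : ℝ) * ((m : ℝ) * (m : ℝ) ^ (n' - 1)) = (n' : ℝ) * (m : ℝ) ^ n' := by
    rcases n' with _ | k
    · simp
    · have hxx : (m : ℝ) * (m : ℝ) ^ k = (m : ℝ) ^ (k + 1) := (pow_succ' _ _).symm
      rw [show k + 1 - 1 = k from rfl, hxx]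
  -- cast of the full sum
  have hcast0 : (∑ y : Fin (n' + 2) → Fin m,
        (sumLenSq (n' + 2) (extWord (n' + 2) hm0 y) : ℝ))
      = ∑ a ∈ range (n' + 2), ∑ b ∈ range (n' + 2), ∑ y : Fin (n' + 2) → Fin m, (((altSegs (n' + 2) (extWord (n' + 2) hm0 y)).filter
        fun p => p.1 ≤ a ∧ a ≤ p.2 ∧ p.1 ≤ b ∧ b ≤ p.2).card : ℝ) := by
    rw [← Nat.cast_sum, hswapN]
    push_cast
    rfl
  -- split the double sum
  have hsplit : (∑ a ∈ range (n' + 2), ∑ b ∈ range (n' + 2), ∑ y : Fin (n' + 2) → Fin m, (((altSegs (n' + 2) (extWord (n' + 2) hm0 y)).filter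
        fun p => p.1 ≤ a ∧ a ≤ p.2 ∧ p.1 ≤ b ∧ b ≤ p.2).card : ℝ))
      = (∑ a ∈ range (n' + 2), ∑ b ∈ range a, ∑ y : Fin (n' + 2) → Fin m, (((altSegs (n' + 2) (extWord (n' + 2) hm0 y)).filter
        fun p => p.1 ≤ a ∧ a ≤ p.2 ∧ p.1 ≤ b ∧ b ≤ p.2).card : ℝ))
        + (∑ a ∈ range (n' + 2), ∑ y : Fin (n' + 2) → Fin m, (((altSegs (n' + 2) (extWord (n' + 2) hm0 y)).filter
        fun p => p.1 ≤ a ∧ a ≤ p.2 ∧ p.1 ≤ a ∧ a ≤ p.2).card : ℝ))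
        + ∑ a ∈ range (n' + 2), ∑ b ∈ Finset.Ico (a + 1) (n' + 2), ∑ y : Fin (n' + 2) → Fin m, (((altSegs (n' + 2) (extWord (n' + 2) hm0 y)).filter
        fun p => p.1 ≤ a ∧ a ≤ p.2 ∧ p.1 ≤ b ∧ b ≤ p.2).card : ℝ) := by
    rw [← Finset.sum_add_distrib, ← Finset.sum_add_distrib]
    apply Finset.sum_congr rfl
    intro a ha
    rw [mem_range] at ha
    calc (∑ b ∈ range (n' + 2), ∑ y : Fin (n' + 2) → Fin m, (((altSegs (n' + 2) (extWord (n' + 2) hm0 y)).filter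
        fun p => p.1 ≤ a ∧ a ≤ p.2 ∧ p.1 ≤ b ∧ b ≤ p.2).card : ℝ))
        = ∑ b ∈ Finset.Ico 0 (n' + 2), ∑ y : Fin (n' + 2) → Fin m, (((altSegs (n' + 2) (extWord (n' + 2) hm0 y)).filter
        fun p => p.1 ≤ a ∧ a ≤ p.2 ∧ p.1 ≤ b ∧ b ≤ p.2).card : ℝ) := by rw [Finset.range_eq_Ico]
      _ = (∑ b ∈ Finset.Ico 0 (a + 1), ∑ y : Fin (n' + 2) → Fin m, (((altSegs (n' + 2) (extWord (n' + 2) hm0 y)).filter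
        fun p => p.1 ≤ a ∧ a ≤ p.2 ∧ p.1 ≤ b ∧ b ≤ p.2).card : ℝ))
          + ∑ b ∈ Finset.Ico (a + 1) (n' + 2), ∑ y : Fin (n' + 2) → Fin m, (((altSegs (n' + 2) (extWord (n' + 2) hm0 y)).filter
        fun p => p.1 ≤ a ∧ a ≤ p.2 ∧ p.1 ≤ b ∧ b ≤ p.2).card : ℝ) :=
        (Finset.sum_Ico_consecutive _ (by omega) (by omega)).symm
      _ = (∑ b ∈ range (a + 1), ∑ y : Fin (n' + 2) → Fin m, (((altSegs (n' + 2) (extWord (n' + 2) hm0 y)).filter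
        fun p => p.1 ≤ a ∧ a ≤ p.2 ∧ p.1 ≤ b ∧ b ≤ p.2).card : ℝ))
          + ∑ b ∈ Finset.Ico (a + 1) (n' + 2), ∑ y : Fin (n' + 2) → Fin m, (((altSegs (n' + 2) (extWord (n' + 2) hm0 y)).filter
        fun p => p.1 ≤ a ∧ a ≤ p.2 ∧ p.1 ≤ b ∧ b ≤ p.2).card : ℝ) := by
        rw [← Finset.range_eq_Ico]
      _ = ((∑ b ∈ range a, ∑ y : Fin (n' + 2) → Fin m, (((altSegs (n' + 2) (extWord (n' + 2) hm0 y)).filter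
        fun p => p.1 ≤ a ∧ a ≤ p.2 ∧ p.1 ≤ b ∧ b ≤ p.2).card : ℝ)) + ∑ y : Fin (n' + 2) → Fin m, (((altSegs (n' + 2) (extWord (n' + 2) hm0 y)).filter
        fun p => p.1 ≤ a ∧ a ≤ p.2 ∧ p.1 ≤ a ∧ a ≤ p.2).card : ℝ))
          + ∑ b ∈ Finset.Ico (a + 1) (n' + 2), ∑ y : Fin (n' + 2) → Fin m, (((altSegs (n' + 2) (extWord (n' + 2) hm0 y)).filter
        fun p => p.1 ≤ a ∧ a ≤ p.2 ∧ p.1 ≤ b ∧ b ≤ p.2).card : ℝ) := by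
        rw [Finset.sum_range_succ]
  -- evaluate the three pieces
  have hlowsum : (∑ a ∈ range (n' + 2), ∑ b ∈ range a, ∑ y : Fin (n' + 2) → Fin m, (((altSegs (n' + 2) (extWord (n' + 2) hm0 y)).filter
        fun p => p.1 ≤ a ∧ a ≤ p.2 ∧ p.1 ≤ b ∧ b ≤ p.2).card : ℝ))
      = ((m : ℝ) - 1) * (m : ℝ) ^ (n' + 1)
        * ((((m : ℝ)⁻¹ ^ (n' + 2) - 1) / ((m : ℝ)⁻¹ - 1) - (n' + 2)) / ((m : ℝ)⁻¹ - 1)) := by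
    rw [Finset.sum_congr rfl fun a ha => Finset.sum_congr rfl fun b hb => hlow a ha b hb]
    exact hT
  have huppsum : (∑ a ∈ range (n' + 2), ∑ b ∈ Finset.Ico (a + 1) (n' + 2), ∑ y : Fin (n' + 2) → Fin m, (((altSegs (n' + 2) (extWord (n' + 2) hm0 y)).filter
        fun p => p.1 ≤ a ∧ a ≤ p.2 ∧ p.1 ≤ b ∧ b ≤ p.2).card : ℝ))
      = ((m : ℝ) - 1) * (m : ℝ) ^ (n' + 1)
        * ((((m : ℝ)⁻¹ ^ (n' + 2) - 1) / ((m : ℝ)⁻¹ - 1) - (n' + 2)) / ((m : ℝ)⁻¹ - 1)) := by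
    have hcomm := Finset.sum_Ico_Ico_comm' 0 (n' + 2)
      (fun a b => ∑ y : Fin (n' + 2) → Fin m, (((altSegs (n' + 2) (extWord (n' + 2) hm0 y)).filter
        fun p => p.1 ≤ a ∧ a ≤ p.2 ∧ p.1 ≤ b ∧ b ≤ p.2).card : ℝ))
    simp only [← Finset.range_eq_Ico] at hcomm
    rw [hcomm]
    rw [Finset.sum_congr rfl fun b hb => Finset.sum_congr rfl fun a ha => hupp b hb a ha]
    exact hT
  have hdiagsum : (∑ a ∈ range (n' + 2), ∑ y : Fin (n' + 2) → Fin m, (((altSegs (n' + 2) (extWord (n' + 2) hm0 y)).filter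
        fun p => p.1 ≤ a ∧ a ≤ p.2 ∧ p.1 ≤ a ∧ a ≤ p.2).card : ℝ))
      = (2 * ((m : ℝ) * (m : ℝ) ^ n') + (n' : ℝ) * (m : ℝ) ^ n')
        + ((n' : ℝ) + 1) * ((m : ℝ) ^ (n' + 2) - (m : ℝ) * (m : ℝ) ^ n') + ((n' : ℝ) + 1) * ((m : ℝ) ^ (n' + 2) - (m : ℝ) * (m : ℝ) ^ n')
        - (n' : ℝ) * (((m : ℝ) - 1) * (m : ℝ) ^ n') := by
    rw [Finset.sum_congr rfl fun u hu => hdiag_cast u (mem_range.1 hu)]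
    rw [Finset.sum_sub_distrib, Finset.sum_add_distrib, Finset.sum_add_distrib,
      hAsum, hBsum, hCsum, hMsum, hn'cast]
  -- final algebra
  rw [hcast0, hsplit, hlowsum, huppsum, hdiagsum]
  have hrpow : (m : ℝ)⁻¹ ^ (n' + 2) = ((m : ℝ) ^ (n' + 2))⁻¹ := inv_pow _ _
  rw [hrpow]
  have hinv1 : (m : ℝ)⁻¹ - 1 = (1 - (m : ℝ)) / (m : ℝ) := by
    field_simp
  rw [hinv1]
  have h1X : (1 : ℝ) - (m : ℝ) ≠ 0 := by intro h; apply hX1ne; linarith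
  push_cast
  field_simp
  ring
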